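/- Let p be a prime, G a finite group, and S ≤ G a subgroup whose index is coprime to p. If c_1, …, c_n ∈ H^*(G; F_p) is a sequence of homogeneous elements whose restrictions to H^*(S; F_p) form a filter-regular sequence, then c_1, …, c_n is a filter-regular sequence in H^*(G; F_p). -/
import Mathlib


/-- A sequence `c : Fin n → R` of homogeneous elements of a graded `k`-algebra `R` is
filter-regular if for each `i` the kernel of multiplication by `c i` on
`R/(c_1, …, c_{i-1})` vanishes in all sufficiently high degrees. -/
def IsFilterRegularSeq {k R : Type*} [Field k] [CommRing R] [Algebra k R]
    (𝒜 : ℕ → Submodule k R) {n : ℕ} (c : Fin n → R) : Prop :=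
  ∀ i : Fin n, ∃ N : ℕ, ∀ d ≥ N, ∀ x ∈ 𝒜 d,
    c i * x ∈ Ideal.span (c '' {j | j < i}) → x ∈ Ideal.span (c '' {j | j < i})

/-- Lemma `lemma:fregSG` of the paper. Let `p` be a prime, `G` a finite
group, and `S ≤ G` a subgroup whose index is coprime to `p`. If `c_1, …, c_n ∈ H^*(G; F_p)`
is a sequence of homogeneous elements whose restrictions to `H^*(S; F_p)` form a
filter-regular sequence, then `c_1, …, c_n` is filter-regular in `H^*(G; F_p)`.

The cohomology rings are abstracted as graded `F_p`-algebras `RG = H^*(G; F_p)` and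
`RS = H^*(S; F_p)` with a grading-preserving restriction homomorphism `algebraMap RG RS`;
the key fact that the transfer map makes `RG` a direct summand of `RS` as an `RG`-module
(because `[G : S]` is coprime to `p`) is recorded by the splitting `tr`. -/
theorem isFilterRegularSeq_of_restriction
    (p : ℕ) [Fact p.Prime] (G : Type*) [Group G] [Finite G]
    (S : Subgroup G) (hS : Nat.Coprime S.index p)
    (RG RS : Type*) [CommRing RG] [CommRing RS]
    [Algebra (ZMod p) RG] [Algebra (ZMod p) RS]
    [Algebra RG RS] [IsScalarTower (ZMod p) RG RS]
    (𝒜 : ℕ → Submodule (ZMod p) RG) (ℬ : ℕ → Submodule (ZMod p) RS)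
    [GradedAlgebra 𝒜] [GradedAlgebra ℬ]
    (hres : ∀ d, ∀ x ∈ 𝒜 d, algebraMap RG RS x ∈ ℬ d)  -- restriction is graded
    -- transfer exhibits `RG` as a direct summand of `RS` as an `RG`-module:
    (tr : RS →ₗ[RG] RG) (htr : ∀ a : RG, tr (algebraMap RG RS a) = a)
    (hrgr : ∀ d, ∀ y ∈ ℬ d, tr y ∈ 𝒜 d)  -- the splitting is graded
    {n : ℕ} (c : Fin n → RG)
    (hhom : ∀ i, ∃ d, c i ∈ 𝒜 d)
    (hreg : IsFilterRegularSeq ℬ (fun i => algebraMap RG RS (c i))) :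
    IsFilterRegularSeq 𝒜 c := by
  intro i
  obtain ⟨N, hN⟩ := hreg i
  refine ⟨N, fun d hd x hx hcx => ?_⟩
  set I : Ideal RG := Ideal.span (c '' {j | j < i}) with hI
  have key : ∀ y ∈ Ideal.span ((fun j => algebraMap RG RS (c j)) '' {j | j < i}),
      ∀ s : RS, tr (s * y) ∈ I := by
    intro y hy
    refine Submodule.span_induction ?_ ?_ ?_ ?_ hy
    · rintro _ ⟨j, hj, rfl⟩ s
      have h1 : s * algebraMap RG RS (c j) = (c j) • s := by
        rw [Algebra.smul_def]; ring
      rw [h1, map_smul, smul_eq_mul]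
      exact Ideal.mul_mem_right _ _ (Ideal.subset_span ⟨j, hj, rfl⟩)
    · intro s; simp
    · intro a b _ _ ha hb s
      rw [mul_add, map_add]; exact I.add_mem (ha s) (hb s)
    · intro t a _ ha s
      have h1 : s * (t • a) = (s * t) * a := by rw [smul_eq_mul]; ring
      rw [h1]; exact ha (s * t)
  have hxim : algebraMap RG RS x ∈ ℬ d := hres d x hx
  have hmem : algebraMap RG RS (c i) * algebraMap RG RS x ∈
      Ideal.span ((fun j => algebraMap RG RS (c j)) '' {j | j < i}) := by
    rw [← map_mul]
    have h2 : (fun j => algebraMap RG RS (c j)) '' {j | j < i}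
        = algebraMap RG RS '' (c '' {j | j < i}) := by
      rw [Set.image_image]
    rw [h2, ← Ideal.map_span]
    exact Ideal.mem_map_of_mem _ hcx
  have h3 := key _ (hN d hd _ hxim hmem) 1
  rwa [one_mul, htr x] at h3
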